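/- For the logistic loss φ(α) = log₂(1 + exp(−α)), the ψ-transform satisfies ψ(θ) = ½(1−θ)log₂(1−θ) + ½(1+θ)log₂(1+θ) for all θ ∈ [0,1]. -/

import Mathlib

open Set

/-- The conditional `φ`-risk `C_η(α) = η φ(α) + (1-η) φ(-α)`. -/
noncomputable def condRisk (φ : ℝ → ℝ) (η α : ℝ) : ℝ := η * φ α + (1 - η) * φ (-α)

/-- `H(η) = inf_α C_η(α)`. -/
noncomputable def Hopt (φ : ℝ → ℝ) (η : ℝ) : ℝ := ⨅ α : ℝ, condRisk φ η α

/-- `H⁻(η)`, the infimum of `C_η(α)` over `α` with `α (2η - 1) ≤ 0`. -/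
noncomputable def Hneg (φ : ℝ → ℝ) (η : ℝ) : ℝ :=
  ⨅ α : {a : ℝ // a * (2 * η - 1) ≤ 0}, condRisk φ η α.1

/-- `ψ̃(θ) = H⁻((1+θ)/2) − H((1+θ)/2)`. -/
noncomputable def psiTilde (φ : ℝ → ℝ) (θ : ℝ) : ℝ :=
  Hneg φ ((1 + θ) / 2) - Hopt φ ((1 + θ) / 2)

/-- The `ψ`-transform: the largest convex lower bound (biconjugate) of `ψ̃` on `[0,1]`. -/
noncomputable def psiT (φ : ℝ → ℝ) (θ : ℝ) : ℝ :=
  sSup {y : ℝ | ∃ g : ℝ → ℝ, ConvexOn ℝ (Icc 0 1) g ∧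
    (∀ t ∈ Icc (0:ℝ) 1, g t ≤ psiTilde φ t) ∧ y = g θ}

/-- `φ` is classification-calibrated: for every `η ≠ 1/2`, `H⁻(η) > H(η)`. -/
def ClassificationCalibrated (φ : ℝ → ℝ) : Prop :=
  ∀ η ∈ Icc (0:ℝ) 1, η ≠ 1 / 2 → Hopt φ η < Hneg φ η

-- my auxiliaries
noncomputable def phiLog : ℝ → ℝ := fun α => Real.logb 2 (1 + Real.exp (-α))

noncomputable def psiLog (θ : ℝ) : ℝ :=
  (1 - θ) / 2 * Real.logb 2 (1 - θ) + (1 + θ) / 2 * Real.logb 2 (1 + θ)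

lemma phiLog_nonneg (a : ℝ) : 0 ≤ phiLog a :=
  Real.logb_nonneg one_lt_two (by nlinarith [Real.exp_pos (-a)])

lemma condRisk_phiLog_nonneg {η : ℝ} (h0 : 0 ≤ η) (h1 : η ≤ 1) (a : ℝ) :
    0 ≤ condRisk phiLog η a := by
  have := phiLog_nonneg a
  have := phiLog_nonneg (-a)
  have : (0:ℝ) ≤ η * phiLog a := mul_nonneg h0 (phiLog_nonneg a)
  have : (0:ℝ) ≤ (1 - η) * phiLog (-a) := mul_nonneg (by linarith) (phiLog_nonneg (-a))
  unfold condRisk; linarith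

lemma bddBelow_condRisk {η : ℝ} (h0 : 0 ≤ η) (h1 : η ≤ 1) :
    BddBelow (range fun α => condRisk phiLog η α) := by
  refine ⟨0, ?_⟩; rintro _ ⟨a, rfl⟩; exact condRisk_phiLog_nonneg h0 h1 a

lemma phiLog_zero : phiLog 0 = 1 := by
  unfold phiLog
  rw [neg_zero, Real.exp_zero, show (1:ℝ) + 1 = 2 by norm_num]
  exact Real.logb_self_eq_one one_lt_two

lemma condRisk_zero {η : ℝ} : condRisk phiLog η 0 = 1 := by
  unfold condRisk; rw [neg_zero, phiLog_zero]; ring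

lemma exp_add_exp_neg_ge (a : ℝ) : 2 ≤ Real.exp a + Real.exp (-a) := by
  have hx := Real.exp_pos a
  have h : Real.exp a * Real.exp (-a) = 1 := by rw [← Real.exp_add]; simp
  nlinarith [sq_nonneg (Real.exp a - 1)]

lemma log_one_add_exp (a : ℝ) :
    Real.log (1 + Real.exp (-a)) = Real.log (1 + Real.exp a) - a := by
  have h : (1:ℝ) + Real.exp (-a) = Real.exp (-a) * (1 + Real.exp a) := by
    rw [mul_add, mul_one, ← Real.exp_add, neg_add_cancel, Real.exp_zero]; ring
  rw [h, Real.log_mul (Real.exp_ne_zero _) (by positivity), Real.log_exp]; ring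

lemma hneg_eq {η : ℝ} (h0 : 1/2 ≤ η) (h1 : η ≤ 1) : Hneg phiLog η = 1 := by
  have h0' : (0:ℝ) ≤ η := by linarith
  have hz : (0:ℝ) * (2 * η - 1) ≤ 0 := by simp
  haveI : Nonempty {a : ℝ // a * (2 * η - 1) ≤ 0} := ⟨⟨0, hz⟩⟩
  apply le_antisymm
  · have hb : BddBelow (range fun α : {a : ℝ // a * (2 * η - 1) ≤ 0} => condRisk phiLog η α.1) := by
      refine ⟨0, ?_⟩; rintro _ ⟨a, rfl⟩; exact condRisk_phiLog_nonneg h0' h1 a.1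
    have := ciInf_le hb (⟨0, hz⟩ : {a : ℝ // a * (2 * η - 1) ≤ 0})
    simpa [condRisk_zero, Hneg] using this
  · apply le_ciInf
    rintro ⟨a, ha⟩
    have hc : (0:ℝ) < Real.log 2 := Real.log_pos one_lt_two
    have hL : 2 * Real.log 2 ≤ Real.log (1 + Real.exp a) + Real.log (1 + Real.exp (-a)) := by
      have hprod : (1 + Real.exp a) * (1 + Real.exp (-a)) = 2 + (Real.exp a + Real.exp (-a)) := by
        have h : Real.exp a * Real.exp (-a) = 1 := by rw [← Real.exp_add]; simp
        ring_nf; linarith [h]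
      have h4 : (4:ℝ) ≤ (1 + Real.exp a) * (1 + Real.exp (-a)) := by
        rw [hprod]; linarith [exp_add_exp_neg_ge a]
      have := Real.log_le_log (by norm_num) h4
      rw [Real.log_mul (by positivity) (by positivity)] at this
      calc 2 * Real.log 2 = Real.log 4 := by
            rw [show (4:ℝ) = 2 ^ 2 by norm_num, Real.log_pow]; push_cast; ring
        _ ≤ _ := this
    have hLa := log_one_add_exp a
    show (1:ℝ) ≤ condRisk phiLog η a
    unfold condRisk phiLog
    rw [Real.logb, Real.logb, neg_neg, hLa]
    rw [show η * ((Real.log (1 + Real.exp a) - a) / Real.log 2) +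
        (1 - η) * (Real.log (1 + Real.exp a) / Real.log 2)
        = (Real.log (1 + Real.exp a) - η * a) / Real.log 2 by ring]
    rw [le_div_iff₀ hc, one_mul]
    nlinarith [ha, hL, hLa]

lemma hopt_lower {η : ℝ} (h0 : 1/2 ≤ η) (h1 : η ≤ 1) (a : ℝ) :
    -(η * Real.logb 2 η + (1 - η) * Real.logb 2 (1 - η)) ≤ condRisk phiLog η a := by
  rcases eq_or_lt_of_le h1 with rfl | h1'
  · simp [condRisk]
    have := condRisk_phiLog_nonneg (by norm_num) le_rfl a
    simpa [condRisk] using this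
  · have hη : 0 < η := by linarith
    have hη2 : 0 < 1 - η := by linarith
    have hc : (0:ℝ) < Real.log 2 := Real.log_pos one_lt_two
    set u : ℝ := η * (1 + Real.exp (-a)) with hu_def
    set v : ℝ := (1 - η) * (1 + Real.exp a) with hv_def
    have hu : 0 < u := by positivity
    have hv : 0 < v := by positivity
    have hlogu : 1 - u⁻¹ ≤ Real.log u := by
      have := Real.log_le_sub_one_of_pos (inv_pos.mpr hu)
      rw [Real.log_inv] at this; linarith
    have hlogv : 1 - v⁻¹ ≤ Real.log v := by
      have := Real.log_le_sub_one_of_pos (inv_pos.mpr hv)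
      rw [Real.log_inv] at this; linarith
    have hee : Real.exp (-a) * Real.exp a = 1 := by rw [← Real.exp_add]; simp
    have key : η * u⁻¹ + (1 - η) * v⁻¹ = 1 := by
      rw [hu_def, hv_def]
      have h1p : (0:ℝ) < 1 + Real.exp (-a) := by positivity
      have h2p : (0:ℝ) < 1 + Real.exp a := by positivity
      field_simp
      linear_combination (-1:ℝ) * hee
    have main : 0 ≤ η * Real.log u + (1 - η) * Real.log v := by
      have e1 : η * (1 - u⁻¹) ≤ η * Real.log u :=
        mul_le_mul_of_nonneg_left hlogu hη.le
      have e2 : (1 - η) * (1 - v⁻¹) ≤ (1 - η) * Real.log v :=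
        mul_le_mul_of_nonneg_left hlogv hη2.le
      nlinarith [key]
    have hlu : Real.log u = Real.log η + Real.log (1 + Real.exp (-a)) :=
      Real.log_mul hη.ne' (by positivity)
    have hlv : Real.log v = Real.log (1 - η) + Real.log (1 + Real.exp a) :=
      Real.log_mul hη2.ne' (by positivity)
    unfold condRisk phiLog
    rw [Real.logb, Real.logb, Real.logb, Real.logb, neg_neg]
    rw [show -(η * (Real.log η / Real.log 2) + (1 - η) * (Real.log (1 - η) / Real.log 2))
        = (-(η * Real.log η + (1 - η) * Real.log (1 - η))) / Real.log 2 by ring]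
    rw [show η * (Real.log (1 + Real.exp (-a)) / Real.log 2) +
        (1 - η) * (Real.log (1 + Real.exp a) / Real.log 2)
        = (η * Real.log (1 + Real.exp (-a)) + (1 - η) * Real.log (1 + Real.exp a)) / Real.log 2 by ring]
    rw [div_le_div_iff₀ hc hc]
    rw [hlu, hlv] at main
    nlinarith [main, hc]

lemma hopt_eq {η : ℝ} (h0 : 1/2 ≤ η) (h1 : η ≤ 1) :
    Hopt phiLog η = -(η * Real.logb 2 η + (1 - η) * Real.logb 2 (1 - η)) := by
  have h0' : (0:ℝ) ≤ η := by linarith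
  apply le_antisymm
  · rcases eq_or_lt_of_le h1 with rfl | h1'
    · simp only [sub_self, zero_mul, add_zero]
      rw [show Real.logb 2 (1:ℝ) = 0 by simp, mul_zero, neg_zero]
      apply le_of_forall_sub_le
      intro ε hε
      have h2 : (1:ℝ) < (2:ℝ) ^ ε := by
        rw [Real.one_lt_rpow_iff_of_pos (by norm_num)]
        exact Or.inl ⟨one_lt_two, hε⟩
      have hle := ciInf_le (bddBelow_condRisk (by norm_num) le_rfl)
        (-Real.log ((2:ℝ) ^ ε - 1))
      have hval : condRisk phiLog 1 (-Real.log ((2:ℝ) ^ ε - 1)) = ε := by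
        unfold condRisk phiLog
        simp only [sub_self, zero_mul, add_zero, one_mul, neg_neg]
        rw [Real.exp_log (by linarith)]
        rw [show (1:ℝ) + ((2:ℝ) ^ ε - 1) = (2:ℝ) ^ ε by ring]
        exact Real.logb_rpow (by norm_num) (by norm_num)
      rw [hval] at hle
      have h3 : Hopt phiLog 1 ≤ ε := hle
      linarith
    · have hη : 0 < η := by linarith
      have hη2 : 0 < 1 - η := by linarith
      have hd : 0 < η / (1 - η) := by positivity
      have := ciInf_le (bddBelow_condRisk h0' h1) (Real.log (η / (1 - η)))
      refine le_trans this (le_of_eq ?_)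
      unfold condRisk phiLog
      rw [neg_neg, Real.exp_neg, Real.exp_log hd]
      rw [show (η / (1 - η))⁻¹ = (1 - η) / η by rw [inv_div]]
      rw [show (1:ℝ) + (1 - η) / η = η⁻¹ by field_simp; ring]
      rw [show (1:ℝ) + η / (1 - η) = (1 - η)⁻¹ by field_simp; ring]
      rw [Real.logb_inv, Real.logb_inv]
      ring
  · exact le_ciInf (hopt_lower h0 h1)

lemma psiTilde_eq {θ : ℝ} (h0 : 0 ≤ θ) (h1 : θ ≤ 1) : psiTilde phiLog θ = psiLog θ := by
  have hm : 1/2 ≤ (1 + θ)/2 := by linarith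
  have hM : (1 + θ)/2 ≤ 1 := by linarith
  unfold psiTilde psiLog
  rw [hneg_eq hm hM, hopt_eq hm hM]
  have h2 : (1:ℝ) - (1 + θ)/2 = (1 - θ)/2 := by ring
  rw [h2]
  have hb1 : Real.logb 2 ((1 + θ)/2) = Real.logb 2 (1 + θ) - 1 := by
    rw [Real.logb_div (by linarith) (by norm_num), Real.logb_self_eq_one one_lt_two]
  rcases eq_or_lt_of_le h1 with rfl | h1'
  · norm_num [Real.logb_self_eq_one one_lt_two]
  · have hb2 : Real.logb 2 ((1 - θ)/2) = Real.logb 2 (1 - θ) - 1 := by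
      rw [Real.logb_div (by linarith) (by norm_num), Real.logb_self_eq_one one_lt_two]
    rw [hb1, hb2]; ring

lemma psiLog_repr (t : ℝ) :
    psiLog t = ((1 - t) * Real.log (1 - t) + (1 + t) * Real.log (1 + t)) / (2 * Real.log 2) := by
  have hc : Real.log 2 ≠ 0 := (Real.log_pos one_lt_two).ne'
  unfold psiLog
  rw [Real.logb, Real.logb]
  field_simp

lemma convexOn_psiLog : ConvexOn ℝ (Icc (0:ℝ) 1) psiLog := by
  have base := Real.convexOn_mul_log
  have A1 : ConvexOn ℝ (Icc (0:ℝ) 1) (fun t => (1 - t) * Real.log (1 - t)) := by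
    have h := base.comp_affineMap ((AffineMap.lineMap (1:ℝ) (0:ℝ) : ℝ →ᵃ[ℝ] ℝ))
    have hset : ((AffineMap.lineMap (1:ℝ) (0:ℝ) : ℝ →ᵃ[ℝ] ℝ)) ⁻¹' (Ici 0) = Iic 1 := by
      ext x
      simp only [AffineMap.lineMap_apply, mem_preimage, mem_Ici, mem_Iic, smul_eq_mul,
        vsub_eq_sub, vadd_eq_add]
      constructor <;> intro <;> linarith
    have hfun : ((fun x => x * Real.log x) ∘ ((AffineMap.lineMap (1:ℝ) (0:ℝ) : ℝ →ᵃ[ℝ] ℝ)))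
        = fun t => (1 - t) * Real.log (1 - t) := by
      funext x; simp [AffineMap.lineMap_apply]; ring_nf
    rw [hset, hfun] at h
    exact h.subset (fun x hx => hx.2) (convex_Icc _ _)
  have A2 : ConvexOn ℝ (Icc (0:ℝ) 1) (fun t => (1 + t) * Real.log (1 + t)) := by
    have h := base.comp_affineMap ((AffineMap.lineMap (1:ℝ) (2:ℝ) : ℝ →ᵃ[ℝ] ℝ))
    have hset : ((AffineMap.lineMap (1:ℝ) (2:ℝ) : ℝ →ᵃ[ℝ] ℝ)) ⁻¹' (Ici 0) = Ici (-1) := by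
      ext x
      simp only [AffineMap.lineMap_apply, mem_preimage, mem_Ici, mem_Iic, smul_eq_mul,
        vsub_eq_sub, vadd_eq_add]
      constructor <;> intro <;> linarith
    have hfun : ((fun x => x * Real.log x) ∘ ((AffineMap.lineMap (1:ℝ) (2:ℝ) : ℝ →ᵃ[ℝ] ℝ)))
        = fun t => (1 + t) * Real.log (1 + t) := by
      funext x; simp [AffineMap.lineMap_apply]; ring_nf
    rw [hset, hfun] at h
    exact h.subset (fun x hx => by simp; linarith [hx.1]) (convex_Icc _ _)
  have hsum := A1.add A2
  have hc : (0:ℝ) ≤ (2 * Real.log 2)⁻¹ := by positivity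
  have hres := hsum.smul hc
  have hfun : psiLog = fun x => (2 * Real.log 2)⁻¹ •
      (((fun t => (1 - t) * Real.log (1 - t)) + fun t => (1 + t) * Real.log (1 + t)) x) := by
    funext t
    simp only [Pi.add_apply, smul_eq_mul]
    rw [psiLog_repr t, div_eq_mul_inv]
    ring
  rw [hfun]
  exact hres

/-- For the logistic loss `φ(α) = log₂(1 + exp (-α))`, the `ψ`-transform is
`ψ(θ) = ½(1-θ) log₂(1-θ) + ½(1+θ) log₂(1+θ)` on `[0,1]`. -/
theorem psi_transform_logistic :
    ∀ θ ∈ Icc (0:ℝ) 1, psiT (fun α => Real.logb 2 (1 + Real.exp (-α))) θ =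
      (1 - θ) / 2 * Real.logb 2 (1 - θ) + (1 + θ) / 2 * Real.logb 2 (1 + θ) := by
  intro θ hθ
  have hphi : (fun α => Real.logb 2 (1 + Real.exp (-α))) = phiLog := rfl
  show psiT phiLog θ = psiLog θ
  apply IsGreatest.csSup_eq
  constructor
  · exact ⟨psiLog, convexOn_psiLog, fun t ht => (psiTilde_eq ht.1 ht.2).ge, rfl⟩
  · rintro y ⟨g, hg, hle, rfl⟩
    exact (hle θ hθ).trans (psiTilde_eq hθ.1 hθ.2).le
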